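/- For every real p ≥ 2 there exists a constant C_p > 0 such that for all vectors x, h in a real inner product space H, |‖x+h‖^p − ‖x‖^p − p·‖x‖^{p-2}·⟨x,h⟩| ≤ C_p·(‖x‖^{p-2}·‖h‖^2 + ‖h‖^p). -/

import Mathlib

open Real

section helpers

/-- Gradient inequality (convexity of rpow) -/
lemma grad_low {q : ℝ} (hq : 1 ≤ q) {u v : ℝ} (hu : 0 ≤ u) (hv : 0 ≤ v) :
    v ^ q + q * v ^ (q - 1) * (u - v) ≤ u ^ q := by
  rcases eq_or_lt_of_le hv with rfl | hv
  · rcases eq_or_lt_of_le hq with rfl | hq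
    · simp
    · rw [Real.zero_rpow (by positivity), Real.zero_rpow (sub_ne_zero.mpr hq.ne')]
      simpa using Real.rpow_nonneg hu q
  · have hz : -1 ≤ u / v - 1 := by
      have : 0 ≤ u / v := by positivity
      linarith
    have hB := one_add_mul_self_le_rpow_one_add hz hq
    have h1 : (1 + (u / v - 1)) = u / v := by ring
    rw [h1, Real.div_rpow hu hv.le] at hB
    have hvq : 0 < v ^ q := Real.rpow_pos_of_pos hv q
    have hrw : v ^ (q - 1) = v ^ q / v := Real.rpow_sub_one hv.ne' q
    rw [hrw]
    have := mul_le_mul_of_nonneg_left hB hvq.le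
    have hv' : v ≠ 0 := hv.ne'
    calc v ^ q + q * (v ^ q / v) * (u - v)
        = v ^ q * (1 + q * (u / v - 1)) := by field_simp
      _ ≤ v ^ q * (u ^ q / v ^ q) := this
      _ = u ^ q := by field_simp

/-- Concavity-side gradient inequality for exponents in [0,1]. -/
lemma grad_high {r : ℝ} (hr0 : 0 ≤ r) (hr1 : r ≤ 1) {u v : ℝ} (hu : 0 ≤ u) (hv : 0 < v) :
    u ^ r ≤ v ^ r + r * v ^ (r - 1) * (u - v) := by
  have hz : -1 ≤ u / v - 1 := by
    have : 0 ≤ u / v := by positivity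
    linarith
  have hB := rpow_one_add_le_one_add_mul_self hz hr0 hr1
  have h1 : (1 + (u / v - 1)) = u / v := by ring
  rw [h1, Real.div_rpow hu hv.le] at hB
  have hvr : 0 < v ^ r := Real.rpow_pos_of_pos hv r
  have hrw : v ^ (r - 1) = v ^ r / v := Real.rpow_sub_one hv.ne' r
  rw [hrw]
  have := mul_le_mul_of_nonneg_left hB hvr.le
  have hv' : v ≠ 0 := hv.ne'
  calc u ^ r = v ^ r * (u ^ r / v ^ r) := by field_simp
    _ ≤ v ^ r * (1 + r * (u / v - 1)) := this
    _ = v ^ r + r * (v ^ r / v) * (u - v) := by field_simp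

/-- Lipschitz-type bound for powers, ordered version. -/
lemma diff_le {r : ℝ} (hr : 0 ≤ r) {u v : ℝ} (hu : 0 < u) (hv : 0 < v) (huv : v ≤ u) :
    u ^ r - v ^ r ≤ r * (u ^ (r - 1) + v ^ (r - 1)) * (u - v) := by
  have h1 : (0:ℝ) ≤ u ^ (r-1) := Real.rpow_nonneg hu.le _
  have h2 : (0:ℝ) ≤ v ^ (r-1) := Real.rpow_nonneg hv.le _
  rcases le_total r 1 with hr1 | hr1
  · have := grad_high hr hr1 hu.le hv
    nlinarith [mul_nonneg (mul_nonneg hr h1) (sub_nonneg.2 huv)]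
  · have := grad_low hr1 hv.le hu.le
    nlinarith [mul_nonneg (mul_nonneg hr h2) (sub_nonneg.2 huv)]

/-- Second-order Taylor bound for rpow. -/
lemma main_est {q : ℝ} (hq : 1 ≤ q) {u v : ℝ} (hu : 0 < u) (hv : 0 < v) :
    u ^ q - v ^ q - q * v ^ (q - 1) * (u - v) ≤
      q * (q - 1) * (u ^ (q - 2) + v ^ (q - 2)) * (u - v) ^ 2 := by
  have hq0 : 0 ≤ q - 1 := by linarith
  have key : u ^ q - v ^ q - q * v ^ (q - 1) * (u - v) ≤ q * (u ^ (q-1) - v ^ (q-1)) * (u - v) := by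
    have := grad_low hq hv.le hu.le  -- u^q + q*u^(q-1)*(v-u) ≤ v^q
    nlinarith
  rcases le_total v u with huv | huv
  · have hd := diff_le hq0 hu hv huv
    have h2 : q - 1 - 1 = q - 2 := by ring
    rw [h2] at hd
    have h3 : (0:ℝ) ≤ q * (u - v) := mul_nonneg (by linarith) (sub_nonneg.2 huv)
    have h4 := mul_le_mul_of_nonneg_left hd h3
    nlinarith [key, h4]
  · have hd := diff_le hq0 hv hu huv
    have h2 : q - 1 - 1 = q - 2 := by ring
    rw [h2] at hd
    have h3 : (0:ℝ) ≤ q * (v - u) := mul_nonneg (by linarith) (sub_nonneg.2 huv)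
    have h4 := mul_le_mul_of_nonneg_left hd h3
    nlinarith [key, h4]

/-- Sandwich bound. -/
lemma sandwich {c u : ℝ} (t : ℝ) (hc : 0 < c) (h1 : c/4 ≤ u) (h2 : u ≤ 4*c) :
    u ^ t ≤ (4 ^ t + 4 ^ (-t)) * c ^ t := by
  have hu : 0 < u := lt_of_lt_of_le (by positivity) h1
  have hct : 0 < c ^ t := Real.rpow_pos_of_pos hc t
  rcases le_total 0 t with ht | ht
  · calc u ^ t ≤ (4*c) ^ t := Real.rpow_le_rpow hu.le h2 ht
      _ = 4 ^ t * c ^ t := Real.mul_rpow (by norm_num) hc.le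
      _ ≤ (4 ^ t + 4 ^ (-t)) * c ^ t := by
          have : (0:ℝ) ≤ 4 ^ (-t) := Real.rpow_nonneg (by norm_num) _
          nlinarith
  · calc u ^ t ≤ (c/4) ^ t := Real.rpow_le_rpow_of_nonpos (by positivity) h1 ht
      _ = 4 ^ (-t) * c ^ t := by
          rw [Real.div_rpow hc.le (by norm_num : (0:ℝ) ≤ 4), Real.rpow_neg (by norm_num : (0:ℝ) ≤ 4), div_eq_mul_inv, mul_comm]
      _ ≤ (4 ^ t + 4 ^ (-t)) * c ^ t := by
          have : (0:ℝ) ≤ 4 ^ t := Real.rpow_nonneg (by norm_num) _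
          nlinarith

end helpers

lemma sq_est {a b s : ℝ} (hb0 : 0 ≤ b) (hba : 2 * b ≤ a) (l1 : -(a * b) ≤ s) (l2 : s ≤ a * b) :
    (2 * s + b ^ 2) ^ 2 ≤ 7 * (a ^ 2 * b ^ 2) := by
  nlinarith [sq_le_sq' l1 l2, mul_le_mul_of_nonneg_right l2 (sq_nonneg b),
    mul_nonneg (mul_nonneg (show (0:ℝ) ≤ a/2 - b by linarith) (show (0:ℝ) ≤ a by linarith)) (sq_nonneg b),
    mul_nonneg (mul_nonneg (show (0:ℝ) ≤ a/2 - b by linarith) (show (0:ℝ) ≤ a/2 + b by linarith)) (sq_nonneg b)]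

lemma low_bound {a b s : ℝ} (l1 : -(a*b) ≤ s) : (a-b)^2 ≤ a^2+2*s+b^2 := by nlinarith
lemma quarter {a b : ℝ} (hb : 0 ≤ b) (h : 2*b ≤ a) : a^2/4 ≤ (a-b)^2 := by nlinarith
lemma up_bound {a b s : ℝ} (l2 : s ≤ a*b) (hb : 0 ≤ b) (h : 2*b ≤ a) : a^2+2*s+b^2 ≤ 4*a^2 := by nlinarith
lemma qq_le {p : ℝ} (hp : 2 ≤ p) : (p/2)*((p/2)-1) ≤ p*p := by nlinarith
lemma U_le {a b s U : ℝ} (hU0 : 0 ≤ U) (ha : 0 ≤ a) (hb : 0 ≤ b) (l2 : s ≤ a*b)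
    (hU2 : U^2 = a^2+2*s+b^2) : U ≤ a+b := by
  have h : U^2 ≤ (a+b)^2 := by nlinarith
  nlinarith [h, sq_nonneg (U+(a+b))]
lemma abs2 {a b s : ℝ} (l1 : -(a*b) ≤ s) (l2 : s ≤ a*b) (hb : 0 ≤ b) (h : a ≤ 2*b) :
    |2*s+b^2| ≤ 5*b^2 := by
  rw [abs_le]; constructor <;> nlinarith
lemma neg_abs_mul3 {q w d : ℝ} (hq : 0 ≤ q) (hw : 0 ≤ w) : -(q*w*|d|) ≤ q*w*d := by
  have h := neg_abs_le d
  nlinarith [mul_nonneg hq hw]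

set_option maxHeartbeats 1000000 in
lemma scalar_main (p : ℝ) (hp : 2 ≤ p) (a b s U : ℝ)
    (ha0 : 0 ≤ a) (hb0 : 0 ≤ b) (hU0 : 0 ≤ U)
    (habs : |s| ≤ a * b) (hU2 : U ^ 2 = a ^ 2 + 2 * s + b ^ 2) :
    |U ^ p - a ^ p - p * a ^ (p - 2) * s| ≤
      (28 * p * p * (4:ℝ) ^ p + (3:ℝ) ^ p + 3 * p) * (a ^ (p - 2) * b ^ (2:ℝ) + b ^ p) := by
  have hp0 : (0:ℝ) < p := by linarith
  rw [show b ^ (2:ℝ) = b ^ 2 from Real.rpow_two b]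
  obtain ⟨q, hq⟩ : ∃ q : ℝ, q = p / 2 := ⟨_, rfl⟩
  obtain ⟨v, hv⟩ : ∃ v : ℝ, v = a ^ 2 := ⟨_, rfl⟩
  obtain ⟨u, hu⟩ : ∃ u : ℝ, u = U ^ 2 := ⟨_, rfl⟩
  have hq1 : 1 ≤ q := by rw [hq]; linarith
  have hu0 : 0 ≤ u := by rw [hu]; positivity
  have hv0 : 0 ≤ v := by rw [hv]; positivity
  have sq_rpow : ∀ w : ℝ, 0 ≤ w → ∀ t : ℝ, (w ^ 2) ^ t = w ^ (2 * t) := by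
    intro w hw t
    rw [Real.rpow_mul hw, Real.rpow_two]
  have hup : u ^ q = U ^ p := by rw [hu, hq, sq_rpow U hU0]; congr 1; ring
  have hvp : v ^ q = a ^ p := by rw [hv, hq, sq_rpow a ha0]; congr 1; ring
  have hvq1 : v ^ (q - 1) = a ^ (p - 2) := by
    rw [hv, hq, sq_rpow a ha0]; congr 1; ring
  obtain ⟨R, hR⟩ : ∃ R : ℝ, R = u ^ q - v ^ q - q * v ^ (q - 1) * (u - v) := ⟨_, rfl⟩
  have huv : u - v = 2 * s + b ^ 2 := by rw [hu, hv, hU2]; ring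
  have hE : U ^ p - a ^ p - p * a ^ (p - 2) * s = R + (p / 2) * a ^ (p - 2) * b ^ 2 := by
    rw [hR, hup, hvp, hvq1, huv, hq]; ring
  have hR0 : 0 ≤ R := by
    have := grad_low hq1 hu0 hv0
    rw [hR]; linarith
  have hap2 : 0 ≤ a ^ (p - 2) := Real.rpow_nonneg ha0 _
  have hbp : 0 ≤ b ^ p := Real.rpow_nonneg hb0 _
  rw [hE]
  have habs' : |R + p / 2 * a ^ (p - 2) * b ^ 2| = R + p / 2 * a ^ (p - 2) * b ^ 2 := by
    apply abs_of_nonneg; positivity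
  rw [habs']
  rcases le_or_gt (2 * b) a with hcase | hcase
  · -- small perturbation case
    rcases eq_or_lt_of_le hb0 with hb0' | hb0'
    · -- b = 0
      have hs0 : s = 0 := by
        have h1 : |s| ≤ 0 := by rw [← hb0'] at habs; simpa using habs
        exact abs_eq_zero.mp (le_antisymm h1 (abs_nonneg s))
      have hR00 : R = 0 := by
        have huv0 : u - v = 0 := by rw [huv, hs0, ← hb0']; ring
        have : u = v := by linarith
        rw [hR, huv0, this]; ring
      rw [hR00, ← hb0', Real.zero_rpow hp0.ne']
      norm_num
    · -- b > 0, a ≥ 2b > 0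
      have ha' : 0 < a := by linarith
      have hvpos : 0 < v := by rw [hv]; positivity
      obtain ⟨l1, l2⟩ := abs_le.mp habs
      have hul : v / 4 ≤ u := by
        have h1 : (a - b) ^ 2 ≤ u := by rw [hu, hU2]; exact low_bound l1
        have h2 : v / 4 ≤ (a - b) ^ 2 := by
          rw [hv]
          have := quarter hb0 hcase
          linarith
        linarith
      have huh : u ≤ 4 * v := by
        rw [hu, hU2, hv]; exact up_bound l2 hb0 hcase
      have hupos : 0 < u := lt_of_lt_of_le (by positivity) hul
      have hRle := main_est hq1 hupos hvpos
      rw [← hR] at hRle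
      have hK1 := sandwich (q - 2) hvpos hul huh
      have hK2 := sandwich (q - 2) hvpos (by linarith : v / 4 ≤ v) (by linarith : v ≤ 4 * v)
      have hKbound : (4:ℝ) ^ (q - 2) + 4 ^ (-(q - 2)) ≤ 2 * 4 ^ p := by
        have e1 : (4:ℝ) ^ (q - 2) ≤ 4 ^ p :=
          Real.rpow_le_rpow_of_exponent_le (by norm_num) (by rw [hq]; linarith)
        have e2 : (4:ℝ) ^ (-(q - 2)) ≤ 4 ^ p :=
          Real.rpow_le_rpow_of_exponent_le (by norm_num) (by rw [hq]; linarith)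
        linarith
      have hvq2 : v ^ (q - 2) = a ^ (p - 4) := by
        rw [hv, sq_rpow a ha0, hq]; congr 1; ring
      have hsq : (u - v) ^ 2 ≤ 7 * (a ^ 2 * b ^ 2) := by
        rw [huv]
        exact sq_est hb0 hcase l1 l2
      have hap4 : (0:ℝ) ≤ a ^ (p - 4) := Real.rpow_nonneg ha0 _
      have h4p : (0:ℝ) ≤ (4:ℝ) ^ p := Real.rpow_nonneg (by norm_num) _
      have hsum : u ^ (q - 2) + v ^ (q - 2) ≤ 4 * 4 ^ p * a ^ (p - 4) := by
        have hvt : (0:ℝ) ≤ v ^ (q - 2) := Real.rpow_nonneg hv0 _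
        rw [hvq2] at hK1 hK2
        linarith [mul_le_mul_of_nonneg_right hKbound hap4]
      have ha24 : a ^ (p - 4) * a ^ 2 = a ^ (p - 2) := by
        rw [← Real.rpow_two a, ← Real.rpow_add ha']
        congr 1; ring
      have hq0 : (0:ℝ) ≤ q := by linarith
      have hq10 : (0:ℝ) ≤ q - 1 := by linarith
      have hRfin : R ≤ 28 * p * p * (4:ℝ) ^ p * (a ^ (p - 2) * b ^ 2) := by
        have step1 : R ≤ q * (q - 1) * (4 * 4 ^ p * a ^ (p - 4)) * (u - v) ^ 2 := by
          have h := mul_le_mul_of_nonneg_right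
            (mul_le_mul_of_nonneg_left hsum (mul_nonneg hq0 hq10)) (sq_nonneg (u - v))
          calc R ≤ q * (q - 1) * (u ^ (q - 2) + v ^ (q - 2)) * (u - v) ^ 2 := hRle
            _ ≤ q * (q - 1) * (4 * 4 ^ p * a ^ (p - 4)) * (u - v) ^ 2 := h
        have step2 : q * (q - 1) * (4 * 4 ^ p * a ^ (p - 4)) * (u - v) ^ 2 ≤
            q * (q - 1) * (4 * 4 ^ p * a ^ (p - 4)) * (7 * (a ^ 2 * b ^ 2)) := by
          apply mul_le_mul_of_nonneg_left hsq
          positivity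
        have step3 : q * (q - 1) * (4 * 4 ^ p * a ^ (p - 4)) * (7 * (a ^ 2 * b ^ 2)) =
            28 * (q * (q - 1)) * (4:ℝ) ^ p * ((a ^ (p - 4) * a ^ 2) * b ^ 2) := by ring
        have step4 : 28 * (q * (q - 1)) * (4:ℝ) ^ p * ((a ^ (p - 4) * a ^ 2) * b ^ 2) ≤
            28 * p * p * (4:ℝ) ^ p * (a ^ (p - 2) * b ^ 2) := by
          rw [ha24]
          have hqq : q * (q - 1) ≤ p * p := by rw [hq]; exact qq_le hp
          have hnn : (0:ℝ) ≤ a ^ (p - 2) * b ^ 2 := by positivity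
          linarith [mul_le_mul_of_nonneg_right hqq (mul_nonneg h4p hnn)]
        linarith
      have h3p : (0:ℝ) ≤ (3:ℝ) ^ p := Real.rpow_nonneg (by norm_num) _
      have t1 : (0:ℝ) ≤ (3:ℝ) ^ p * (a ^ (p - 2) * b ^ 2) := by positivity
      have t2 : (0:ℝ) ≤ (3 * p - p / 2) * (a ^ (p - 2) * b ^ 2) := by
        apply mul_nonneg (by linarith) (by positivity)
      have h28 : (0:ℝ) ≤ 28 * p * p * (4:ℝ) ^ p :=
        mul_nonneg (mul_nonneg (mul_nonneg (by norm_num) hp0.le) hp0.le) h4p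
      have t3 : (0:ℝ) ≤ (28 * p * p * (4:ℝ) ^ p + (3:ℝ) ^ p + 3 * p) * b ^ p := by
        apply mul_nonneg (by linarith) hbp
      have expand : (28 * p * p * (4:ℝ) ^ p + (3:ℝ) ^ p + 3 * p) * (a ^ (p - 2) * b ^ 2 + b ^ p)
          = 28 * p * p * (4:ℝ) ^ p * (a ^ (p - 2) * b ^ 2) + (3:ℝ) ^ p * (a ^ (p - 2) * b ^ 2)
            + (3 * p - p / 2) * (a ^ (p - 2) * b ^ 2) + p / 2 * a ^ (p - 2) * b ^ 2
            + (28 * p * p * (4:ℝ) ^ p + (3:ℝ) ^ p + 3 * p) * b ^ p := by ring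
      rw [expand]
      linarith [hRfin, t1, t2, t3]
  · -- large perturbation case: a < 2b
    have hb0' : 0 < b := by linarith
    have hRle : R ≤ (3:ℝ) ^ p * b ^ p + (5 * p / 2) * (a ^ (p - 2) * b ^ 2) := by
      have h1 : u ^ q ≤ (3:ℝ) ^ p * b ^ p := by
        have hUab : U ≤ a + b := U_le hU0 ha0 hb0 (abs_le.mp habs).2 hU2
        have hUle : U ≤ 3 * b := by linarith
        rw [hup]
        calc U ^ p ≤ (3 * b) ^ p := Real.rpow_le_rpow hU0 hUle hp0.le
          _ = (3:ℝ) ^ p * b ^ p := Real.mul_rpow (by norm_num) hb0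
      have h2 : 0 ≤ v ^ q := Real.rpow_nonneg hv0 _
      have h3 : q * v ^ (q - 1) * |u - v| ≤ (5 * p / 2) * (a ^ (p - 2) * b ^ 2) := by
        rw [hvq1, huv]
        have habs2 : |2 * s + b ^ 2| ≤ 5 * b ^ 2 :=
          abs2 (abs_le.mp habs).1 (abs_le.mp habs).2 hb0 hcase.le
        calc q * a ^ (p - 2) * |2 * s + b ^ 2| ≤ q * a ^ (p - 2) * (5 * b ^ 2) := by
              apply mul_le_mul_of_nonneg_left habs2
              have hq0 : (0:ℝ) ≤ q := by linarith
              positivity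
          _ = (5 * q) * (a ^ (p - 2) * b ^ 2) := by ring
          _ = (5 * p / 2) * (a ^ (p - 2) * b ^ 2) := by rw [hq]; ring
      have h4 : -(q * v ^ (q - 1) * |u - v|) ≤ q * v ^ (q - 1) * (u - v) :=
        neg_abs_mul3 (by linarith) (Real.rpow_nonneg hv0 _)
      rw [hR]
      linarith
    have t1 : (0:ℝ) ≤ (28 * p * p * (4:ℝ) ^ p + 3 * p) * b ^ p := by
      apply mul_nonneg ?_ hbp
      have h44 : (0:ℝ) ≤ 28 * p * p * (4:ℝ) ^ p :=
        mul_nonneg (mul_nonneg (mul_nonneg (by norm_num) hp0.le) hp0.le)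
          (Real.rpow_nonneg (by norm_num) _)
      linarith
    have t2 : (0:ℝ) ≤ (28 * p * p * (4:ℝ) ^ p + (3:ℝ) ^ p) * (a ^ (p - 2) * b ^ 2) := by
      apply mul_nonneg ?_ (by positivity)
      have h44 : (0:ℝ) ≤ 28 * p * p * (4:ℝ) ^ p :=
        mul_nonneg (mul_nonneg (mul_nonneg (by norm_num) hp0.le) hp0.le)
          (Real.rpow_nonneg (by norm_num) _)
      have h2 : (0:ℝ) ≤ (3:ℝ) ^ p := Real.rpow_nonneg (by norm_num) _
      linarith
    have expand : (28 * p * p * (4:ℝ) ^ p + (3:ℝ) ^ p + 3 * p) * (a ^ (p - 2) * b ^ 2 + b ^ p)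
        = (28 * p * p * (4:ℝ) ^ p + (3:ℝ) ^ p) * (a ^ (p - 2) * b ^ 2)
          + (5 * p / 2) * (a ^ (p - 2) * b ^ 2) + p / 2 * a ^ (p - 2) * b ^ 2
          + (3:ℝ) ^ p * b ^ p + (28 * p * p * (4:ℝ) ^ p + 3 * p) * b ^ p := by ring
    rw [expand]
    linarith [hRle, t1, t2]

/-- Taylor-type estimate for the p-th power of the norm in a real inner product space. -/
theorem stmt1 {H : Type*} [NormedAddCommGroup H] [InnerProductSpace ℝ H]
    (p : ℝ) (hp : 2 ≤ p) :
    ∃ C > 0, ∀ x h : H,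
      |‖x + h‖ ^ p - ‖x‖ ^ p - p * ‖x‖ ^ (p - 2) * (inner ℝ x h : ℝ)| ≤
        C * (‖x‖ ^ (p - 2) * ‖h‖ ^ (2 : ℝ) + ‖h‖ ^ p) := by
  refine ⟨28 * p * p * (4:ℝ) ^ p + (3:ℝ) ^ p + 3 * p, ?_, fun x h =>
    scalar_main p hp ‖x‖ ‖h‖ (inner ℝ x h) ‖x + h‖ (norm_nonneg x) (norm_nonneg h)
      (norm_nonneg _) (abs_real_inner_le_norm x h) (norm_add_sq_real x h)⟩
  have hp0 : (0:ℝ) < p := by linarith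
  have h1 : (0:ℝ) < (4:ℝ) ^ p := Real.rpow_pos_of_pos (by norm_num) p
  have h2 : (0:ℝ) < (3:ℝ) ^ p := Real.rpow_pos_of_pos (by norm_num) p
  have h3 : (0:ℝ) < 28 * p * p * (4:ℝ) ^ p :=
    mul_pos (mul_pos (mul_pos (by norm_num) hp0) hp0) h1
  linarith
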